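/- Let π : A → L(E) be a G-equivariant representation of a G-algebra A on a G-Hilbert B-module (E,W). Then the crossed-product action (f·ξ)(u) := ∫ π_{r(v)}(f(v)) W_v(ξ(v⁻¹u)) dλ^{r(u)}(v) is *-compatible with the convolution involution: ⟨f·ξ, ξ'⟩_G = ⟨ξ, f*·ξ'⟩_G for all f ∈ Γ_c(G;r*𝔄) and ξ, ξ' ∈ Γ_c(G;r*𝔈). -/

import Mathlib

open MeasureTheory
open scoped Classical

/-- A groupoid dynamical system `(𝔄, G, α)` over a locally compact, second countable,
locally Hausdorff groupoid `G` with Haar system `{λˣ}`: the algebraic and topological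
groupoid structure, an upper-semicontinuous C*-bundle over the unit space `G⁰ ⊆ G`
(recorded as the family of fibres `A x`, with the bundle topology on the total space
given by the instance on `(x : G) × A x`), a continuous action of `G` by fibrewise
*-isomorphisms `α_u : A (s u) → A (r u)` with `α_{uv} = α_u ∘ α_v`, and a Haar system. -/
structure DynSys (G : Type) [TopologicalSpace G] [MeasurableSpace G]
    (A : G → Type) [∀ x, NonUnitalNormedRing (A x)] [∀ x, StarRing (A x)]
    [∀ x, CStarRing (A x)] [∀ x, NormedSpace ℂ (A x)] [∀ x, CompleteSpace (A x)]
    [TopologicalSpace ((x : G) × A x)] : Type 1 where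
  -- the algebraic groupoid structure
  isUnit : G → Prop
  r : G → G
  s : G → G
  r_isUnit : ∀ u, isUnit (r u)
  s_isUnit : ∀ u, isUnit (s u)
  r_of_isUnit : ∀ u, isUnit u → r u = u
  s_of_isUnit : ∀ u, isUnit u → s u = u
  mul : (u v : G) → s u = r v → G
  inv : G → G
  inv_inv : ∀ u, inv (inv u) = u
  r_inv : ∀ u, r (inv u) = s u
  s_inv : ∀ u, s (inv u) = r u
  r_mul : ∀ u v h, r (mul u v h) = r u
  s_mul : ∀ u v h, s (mul u v h) = s v
  mul_assoc : ∀ u v w (h₁ : s u = r v) (h₂ : s v = r w),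
    mul (mul u v h₁) w (by rw [s_mul]; exact h₂)
      = mul u (mul v w h₂) (by rw [r_mul]; exact h₁)
  mul_unit_right : ∀ u, mul u (s u) (by rw [r_of_isUnit (s u) (s_isUnit u)]) = u
  mul_unit_left : ∀ u, mul (r u) u (by rw [s_of_isUnit (r u) (r_isUnit u)]) = u
  mul_inv : ∀ u, mul u (inv u) (r_inv u).symm = r u
  inv_mul : ∀ u, mul (inv u) u (s_inv u) = s u
  -- the topological structure: G locally compact, second countable, locally Hausdorff,
  -- with Hausdorff locally compact unit space
  locallyCompact : LocallyCompactSpace G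
  secondCountable : SecondCountableTopology G
  locallyHausdorff : ∀ u : G, ∃ V : Set G, u ∈ V ∧ IsOpen V ∧ T2Space ↥V
  unitSpace_t2 : T2Space {x : G // isUnit x}
  continuous_r : Continuous r
  continuous_s : Continuous s
  isOpenMap_r : IsOpenMap r
  isOpenMap_s : IsOpenMap s
  continuous_inv : Continuous inv
  continuous_mul : Continuous fun q : {q : G × G // s q.1 = r q.2} => mul q.1.1 q.1.2 q.2
  borel : BorelSpace G
  -- the action of G on the C*-bundle by fibrewise *-isomorphisms
  act : (u : G) → A (s u) → A (r u)
  act_add : ∀ u a b, act u (a + b) = act u a + act u b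
  act_smul : ∀ u (c : ℂ) a, act u (c • a) = c • act u a
  act_mul : ∀ u a b, act u (a * b) = act u a * act u b
  act_star : ∀ u a, act u (star a) = star (act u a)
  act_norm : ∀ u a, ‖act u a‖ = ‖a‖
  act_comp : ∀ u v (h : s u = r v) (a : A (s v)),
    cast (congrArg A (r_mul u v h)) (act (mul u v h) (cast (congrArg A (s_mul u v h).symm) a))
      = act u (cast (congrArg A h.symm) (act v a))
  act_unit : ∀ (u : G) (a : A (s (s u))),
    act (s u) a = cast (congrArg A ((s_of_isUnit (s u) (s_isUnit u)).trans
      (r_of_isUnit (s u) (s_isUnit u)).symm)) a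
  continuous_act : Continuous fun q : {q : G × ((x : G) × A x) // q.2.1 = s q.1} =>
    (⟨r q.1.1, act q.1.1 (cast (congrArg A q.2) q.1.2.2)⟩ : (x : G) × A x)
  -- the Haar system
  haar : G → Measure G
  haar_supported : ∀ x, isUnit x → haar x {u | r u ≠ x} = 0
  haar_finiteOnCompacts : ∀ x, IsFiniteMeasureOnCompacts (haar x)
  haar_left_invariant : ∀ (v : G) (f : G → A (r v)),
    (∫ u, (if h : s v = r u then f (mul v u h) else 0) ∂(haar (s v)))
      = ∫ u, f u ∂(haar (r v))
  haar_continuous : ∀ f : G → ℝ, Continuous f → HasCompactSupport f →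
    Continuous fun x => ∫ u, f u ∂(haar x)

namespace DynSys

variable {G : Type} [TopologicalSpace G] [MeasurableSpace G]
  {A : G → Type} [∀ x, NonUnitalNormedRing (A x)] [∀ x, StarRing (A x)]
  [∀ x, CStarRing (A x)] [∀ x, NormedSpace ℂ (A x)] [∀ x, CompleteSpace (A x)]
  [TopologicalSpace ((x : G) × A x)]
  (S : DynSys G A)

/-- Transport along an equality of base points. -/
def cA {x y : G} (h : x = y) (a : A x) : A y := cast (congrArg A h) a

/-- The convolution product
`f * g (u) = ∫_G f(v) α_v(g(v⁻¹u)) dλ^{r(u)}(v)` on sections of `r*𝔄`. -/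
noncomputable def conv (f g : (u : G) → A (S.r u)) : (u : G) → A (S.r u) :=
  fun u => ∫ v, (if h : S.r v = S.r u then
      cA h (f v * S.act v (cA ((S.r_mul (S.inv v) u ((S.s_inv v).trans h)).trans (S.r_inv v))
        (g (S.mul (S.inv v) u ((S.s_inv v).trans h)))))
    else 0) ∂(S.haar (S.r u))

/-- The involution `f^*(u) = α_u(f(u⁻¹)^*)` on sections of `r*𝔄`. -/
def starSec (f : (u : G) → A (S.r u)) : (u : G) → A (S.r u) :=
  fun u => S.act u (cA (S.r_inv u) (star (f (S.inv u))))

/-- A compactly supported continuous section of `r*𝔄` over a Hausdorff open subset of `G`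
(extended by zero). -/
def IsCcPiece (f : (u : G) → A (S.r u)) : Prop :=
  ∃ V : Set G, IsOpen V ∧ T2Space ↥V ∧
    ContinuousOn (fun u => (⟨S.r u, f u⟩ : (x : G) × A x)) V ∧
    ∃ K : Set G, K ⊆ V ∧ IsCompact K ∧ ∀ u ∉ K, f u = 0

/-- Membership in `Γ_c(G; r*𝔄)`: the span of compactly supported continuous sections over
Hausdorff open subsets of `G`. -/
def MemCc (f : (u : G) → A (S.r u)) : Prop :=
  ∃ (n : ℕ) (g : Fin n → ((u : G) → A (S.r u))),
    (∀ i, S.IsCcPiece (g i)) ∧ ∀ u, f u = ∑ i, g i u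

end DynSys

open DynSys

/-- A `G`-Hilbert `B`-module over the groupoid dynamical system `S`, realised fibrewise:
an upper-semicontinuous bundle of Hilbert `A x`-modules `E x` over the unit space, with
right actions `mo`, `A x`-valued inner products `innerE`, and a continuous action of `G`
by isometric isomorphisms `W_u : E (s u) → E (r u)` compatible with `α`. -/
structure GHilb {G : Type} [TopologicalSpace G] [MeasurableSpace G]
    {A : G → Type} [∀ x, NonUnitalNormedRing (A x)] [∀ x, StarRing (A x)]
    [∀ x, CStarRing (A x)] [∀ x, NormedSpace ℂ (A x)] [∀ x, CompleteSpace (A x)]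
    [TopologicalSpace ((x : G) × A x)]
    (S : DynSys G A)
    (E : G → Type) [∀ x, NormedAddCommGroup (E x)] [∀ x, NormedSpace ℂ (E x)]
    [∀ x, CompleteSpace (E x)] [TopologicalSpace ((x : G) × E x)] : Type 1 where
  mo : ∀ x, E x → A x → E x
  mo_add_left : ∀ x e f a, mo x (e + f) a = mo x e a + mo x f a
  mo_add_right : ∀ x e a b, mo x e (a + b) = mo x e a + mo x e b
  mo_mul : ∀ x e a b, mo x (mo x e a) b = mo x e (a * b)
  mo_smul : ∀ x (c : ℂ) e a, mo x (c • e) a = c • mo x e a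
  innerE : ∀ x, E x → E x → A x
  innerE_star : ∀ x e f, star (innerE x e f) = innerE x f e
  innerE_add_right : ∀ x e f g, innerE x e (f + g) = innerE x e f + innerE x e g
  innerE_smul_right : ∀ x (c : ℂ) e f, innerE x e (c • f) = c • innerE x e f
  innerE_mo_right : ∀ x e f a, innerE x e (mo x f a) = innerE x e f * a
  innerE_norm : ∀ x e, ‖innerE x e e‖ = ‖e‖ ^ 2
  W : (u : G) → E (S.s u) → E (S.r u)
  W_add : ∀ u e f, W u (e + f) = W u e + W u f
  W_smul : ∀ u (c : ℂ) e, W u (c • e) = c • W u e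
  W_isom : ∀ u e, ‖W u e‖ = ‖e‖
  W_inner : ∀ u e f, innerE (S.r u) (W u e) (W u f) = S.act u (innerE (S.s u) e f)
  W_mo : ∀ u e a, W u (mo (S.s u) e a) = mo (S.r u) (W u e) (S.act u a)
  W_comp : ∀ u v (h : S.s u = S.r v) (e : E (S.s v)),
    cast (congrArg E (S.r_mul u v h))
        (W (S.mul u v h) (cast (congrArg E (S.s_mul u v h).symm) e))
      = W u (cast (congrArg E h.symm) (W v e))
  W_unit : ∀ (u : G) (e : E (S.s (S.s u))),
    W (S.s u) e = cast (congrArg E ((S.s_of_isUnit (S.s u) (S.s_isUnit u)).trans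
      (S.r_of_isUnit (S.s u) (S.s_isUnit u)).symm)) e
  continuous_W : Continuous fun q : {q : G × ((x : G) × E x) // q.2.1 = S.s q.1} =>
    (⟨S.r q.1.1, W q.1.1 (cast (congrArg E q.2) q.1.2.2)⟩ : (x : G) × E x)

namespace GHilb

variable {G : Type} [TopologicalSpace G] [MeasurableSpace G]
  {A : G → Type} [∀ x, NonUnitalNormedRing (A x)] [∀ x, StarRing (A x)]
  [∀ x, CStarRing (A x)] [∀ x, NormedSpace ℂ (A x)] [∀ x, CompleteSpace (A x)]
  [TopologicalSpace ((x : G) × A x)]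
  {S : DynSys G A}
  {E : G → Type} [∀ x, NormedAddCommGroup (E x)] [∀ x, NormedSpace ℂ (E x)]
  [∀ x, CompleteSpace (E x)] [TopologicalSpace ((x : G) × E x)]
  (H : GHilb S E)

/-- Transport along an equality of base points. -/
def cE {x y : G} (h : x = y) (e : E x) : E y := cast (congrArg E h) e

/-- The `Γ_c(G; r*𝔅)`-valued inner product
`⟨ξ,ξ'⟩_G(u) = ∫ β_v(⟨ξ(v⁻¹), ξ'(v⁻¹u)⟩_{s(v)}) dλ^{r(u)}(v)` on `Γ_c(G; r*𝔈)`. -/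
noncomputable def innerG (ξ ξ' : (u : G) → E (S.r u)) : (u : G) → A (S.r u) :=
  fun u => ∫ v, (if h : S.r v = S.r u then
      cA h (S.act v (H.innerE (S.s v) (cE (S.r_inv v) (ξ (S.inv v)))
        (cE ((S.r_mul (S.inv v) u ((S.s_inv v).trans h)).trans (S.r_inv v))
          (ξ' (S.mul (S.inv v) u ((S.s_inv v).trans h))))))
    else 0) ∂(S.haar (S.r u))

/-- Membership in `Γ_c(G; r*𝔈)`. -/
def MemCcE (ξ : (u : G) → E (S.r u)) : Prop :=
  ∃ (n : ℕ) (g : Fin n → ((u : G) → E (S.r u))),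
    (∀ i, ∃ V : Set G, IsOpen V ∧ T2Space ↥V ∧
      ContinuousOn (fun u => (⟨S.r u, g i u⟩ : (x : G) × E x)) V ∧
      ∃ K : Set G, K ⊆ V ∧ IsCompact K ∧ ∀ u ∉ K, g i u = 0) ∧
    ∀ u, ξ u = ∑ i, g i u

end GHilb

namespace GHilb

variable {G : Type} [TopologicalSpace G] [MeasurableSpace G]
  {A : G → Type} [∀ x, NonUnitalNormedRing (A x)] [∀ x, StarRing (A x)]
  [∀ x, CStarRing (A x)] [∀ x, NormedSpace ℂ (A x)] [∀ x, CompleteSpace (A x)]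
  [TopologicalSpace ((x : G) × A x)]
  {S : DynSys G A}
  {E : G → Type} [∀ x, NormedAddCommGroup (E x)] [∀ x, NormedSpace ℂ (E x)]
  [∀ x, CompleteSpace (E x)] [TopologicalSpace ((x : G) × E x)]
  (H : GHilb S E)

/-- The crossed-product action
`(f·ξ)(u) = ∫ π_{r(v)}(f(v)) W_v(ξ(v⁻¹u)) dλ^{r(u)}(v)`
of `Γ_c(G; r*𝔄)` on `Γ_c(G; r*𝔈)`, for a representation `π` of the `G`-algebra `A`. -/
noncomputable def cAct (π : ∀ x, A x → (E x →L[ℂ] E x))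
    (f : (u : G) → A (S.r u)) (ξ : (u : G) → E (S.r u)) : (u : G) → E (S.r u) :=
  fun u => ∫ v, (if h : S.r v = S.r u then
      cE h (π (S.r v) (f v) (H.W v
        (cE ((S.r_mul (S.inv v) u ((S.s_inv v).trans h)).trans (S.r_inv v))
          (ξ (S.mul (S.inv v) u ((S.s_inv v).trans h))))))
    else 0) ∂(S.haar (S.r u))

end GHilb

open GHilb

/-! ### Auxiliary infrastructure for the proof -/

namespace DynSys

variable {G : Type} [TopologicalSpace G] [MeasurableSpace G]
  {A : G → Type} [∀ x, NonUnitalNormedRing (A x)] [∀ x, StarRing (A x)]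
  [∀ x, CStarRing (A x)] [∀ x, NormedSpace ℂ (A x)] [∀ x, CompleteSpace (A x)]
  [TopologicalSpace ((x : G) × A x)]
  (S : DynSys G A)

include S in
theorem aux_t1Space : T1Space G := by
  constructor
  intro x
  rw [← isOpen_compl_iff, isOpen_iff_mem_nhds]
  intro y hy
  obtain ⟨V, hyV, hVopen, hVt2⟩ := S.locallyHausdorff y
  by_cases hx : x ∈ V
  · obtain ⟨U1, U2, hU1, hU2, hyU1, hxU2, hdisj⟩ :=
      t2_separation (show (⟨y, hyV⟩ : ↥V) ≠ ⟨x, hx⟩ by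
        simp only [ne_eq, Subtype.mk.injEq]
        simpa using hy)
    obtain ⟨O, hO, hOeq⟩ := isOpen_induced_iff.mp hU1
    refine mem_nhds_iff.mpr ⟨O ∩ V, ?_, hO.inter hVopen, ?_, hyV⟩
    · intro z hz
      simp only [Set.mem_compl_iff, Set.mem_singleton_iff]
      rintro rfl
      have : (⟨z, hx⟩ : ↥V) ∈ U1 := by rw [← hOeq]; exact hz.1
      exact Set.disjoint_left.mp hdisj this hxU2
    · have : (⟨y, hyV⟩ : ↥V) ∈ Subtype.val ⁻¹' O := by rw [hOeq]; exact hyU1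
      exact this
  · refine mem_nhds_iff.mpr ⟨V, ?_, hVopen, hyV⟩
    intro z hz
    simp only [Set.mem_compl_iff, Set.mem_singleton_iff]
    rintro rfl
    exact hx hz

theorem aux_unitsOpen : IsOpen {x | S.isUnit x} := by
  have h : {x | S.isUnit x} = Set.range S.r := by
    ext x
    constructor
    · intro hx; exact ⟨x, S.r_of_isUnit x hx⟩
    · rintro ⟨y, rfl⟩; exact S.r_isUnit y
  rw [h, ← Set.image_univ]
  exact S.isOpenMap_r _ isOpen_univ

theorem aux_mul_congr {v v' w w' : G} (hv : v = v') (hw : w = w')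
    (h : S.s v = S.r w) (h' : S.s v' = S.r w') : S.mul v w h = S.mul v' w' h' := by
  subst hv; subst hw; rfl

theorem aux_r_r (x : G) : S.r (S.r x) = S.r x := S.r_of_isUnit _ (S.r_isUnit x)
theorem aux_s_r (x : G) : S.s (S.r x) = S.r x := S.s_of_isUnit _ (S.r_isUnit x)
theorem aux_r_s (x : G) : S.r (S.s x) = S.s x := S.r_of_isUnit _ (S.s_isUnit x)
theorem aux_s_s (x : G) : S.s (S.s x) = S.s x := S.s_of_isUnit _ (S.s_isUnit x)

theorem aux_mul_unit_right (u x : G) (hx : x = S.s u) (h : S.s u = S.r x) :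
    S.mul u x h = u := by
  subst hx; exact S.mul_unit_right u

theorem aux_mul_unit_left (u x : G) (hx : x = S.r u) (h : S.s x = S.r u) :
    S.mul x u h = u := by
  subst hx; exact S.mul_unit_left u

/-- `v⁻¹ (v w) = w`. -/
theorem aux_inv_mul_cancel (v w : G) (h : S.s v = S.r w)
    (h' : S.s (S.inv v) = S.r (S.mul v w h)) :
    S.mul (S.inv v) (S.mul v w h) h' = w := by
  have ha : S.mul (S.inv v) (S.mul v w h) h'
      = S.mul (S.mul (S.inv v) v (S.s_inv v)) w
        (by rw [S.s_mul]; exact h) := (S.mul_assoc (S.inv v) v w (S.s_inv v) h).symm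
  rw [ha]
  exact S.aux_mul_unit_left w _ ((S.inv_mul v).trans h) _

/-- `v (v⁻¹ w) = w`. -/
theorem aux_mul_inv_cancel (v w : G) (h : S.s (S.inv v) = S.r w)
    (h' : S.s v = S.r (S.mul (S.inv v) w h)) :
    S.mul v (S.mul (S.inv v) w h) h' = w := by
  have h2 : S.s (S.inv (S.inv v)) = S.r (S.mul (S.inv v) w h) := by
    rw [S.inv_inv]; exact h'
  exact (S.aux_mul_congr (S.inv_inv v).symm rfl h' h2).trans
    (S.aux_inv_mul_cancel (S.inv v) w h h2)

/-- `(v w)⁻¹ = w⁻¹ v⁻¹`. -/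
theorem aux_inv_mul_rev (v w : G) (h : S.s v = S.r w)
    (h2 : S.s (S.inv w) = S.r (S.inv v)) :
    S.inv (S.mul v w h) = S.mul (S.inv w) (S.inv v) h2 := by
  have c1 : S.s (S.inv v) = S.r (S.mul v w h) := by rw [S.s_inv, S.r_mul]
  have a2 : S.mul (S.inv v) (S.mul v w h) c1 = w := S.aux_inv_mul_cancel v w h c1
  have hsq : S.s (S.mul (S.inv w) (S.inv v) h2) = S.r (S.mul v w h) := by
    rw [S.s_mul]; exact c1
  have hqp : S.mul (S.mul (S.inv w) (S.inv v) h2) (S.mul v w h) hsq = S.s w := by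
    have a1 := S.mul_assoc (S.inv w) (S.inv v) (S.mul v w h) h2 c1
    refine Eq.trans (Eq.trans (S.aux_mul_congr rfl rfl hsq _) a1) ?_
    exact Eq.trans (S.aux_mul_congr rfl a2 _ (S.s_inv w)) (S.inv_mul w)
  have pf1 : S.s (S.mul (S.inv w) (S.inv v) h2) = S.r (S.r (S.mul v w h)) := by
    rw [S.aux_r_r]; exact hsq
  have e1 : S.mul (S.inv w) (S.inv v) h2
      = S.mul (S.mul (S.inv w) (S.inv v) h2) (S.r (S.mul v w h)) pf1 :=
    (S.aux_mul_unit_right _ _ hsq.symm pf1).symm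
  have pf2 : S.s (S.mul (S.inv w) (S.inv v) h2)
      = S.r (S.mul (S.mul v w h) (S.inv (S.mul v w h)) (S.r_inv (S.mul v w h)).symm) := by
    rw [S.r_mul]; exact hsq
  have e2 : S.mul (S.mul (S.inv w) (S.inv v) h2) (S.r (S.mul v w h)) pf1
      = S.mul (S.mul (S.inv w) (S.inv v) h2)
          (S.mul (S.mul v w h) (S.inv (S.mul v w h)) (S.r_inv (S.mul v w h)).symm) pf2 :=
    S.aux_mul_congr rfl (S.mul_inv (S.mul v w h)).symm pf1 pf2
  have pf3 : S.s (S.mul v w h) = S.r (S.inv (S.mul v w h)) := (S.r_inv _).symm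
  have e3 := (S.mul_assoc (S.mul (S.inv w) (S.inv v) h2) (S.mul v w h)
      (S.inv (S.mul v w h)) hsq pf3).symm
  have pf4 : S.s (S.s w) = S.r (S.inv (S.mul v w h)) := by
    rw [S.aux_s_s, S.r_inv, S.s_mul]
  have e4 : S.mul (S.mul (S.mul (S.inv w) (S.inv v) h2) (S.mul v w h) hsq)
        (S.inv (S.mul v w h)) (by rw [S.s_mul]; exact pf3)
      = S.mul (S.s w) (S.inv (S.mul v w h)) pf4 :=
    S.aux_mul_congr hqp rfl _ pf4
  have e5 : S.mul (S.s w) (S.inv (S.mul v w h)) pf4 = S.inv (S.mul v w h) := by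
    refine S.aux_mul_unit_left _ _ ?_ pf4
    rw [S.r_inv, S.s_mul]
  exact (((((e1.trans e2).trans (Eq.trans (S.aux_mul_congr rfl rfl pf2 _) e3)).trans
    (Eq.trans (S.aux_mul_congr rfl rfl _ (by rw [S.s_mul]; exact pf3)) e4)).trans e5)).symm

/-- every point of an `r`-fibre is isolated in the fibre -/
theorem aux_fiber_singleton_open (u : G) :
    ∃ U : Set G, IsOpen U ∧ u ∈ U ∧ ∀ v ∈ U, S.r v = S.r u → v = u := by
  -- consider the map v ↦ u⁻¹ v on the subtype T = {v // r v = r u}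
  let T := {v : G // S.r v = S.r u}
  let m : T → G := fun v => S.mul (S.inv u) v.val ((S.s_inv u).trans v.prop.symm)
  have hm : Continuous m := by
    have c1 : Continuous fun v : T => (⟨(S.inv u, v.val),
        (S.s_inv u).trans v.prop.symm⟩ : {q : G × G // S.s q.1 = S.r q.2}) := by
      refine Continuous.subtype_mk ?_ _
      exact continuous_const.prodMk continuous_subtype_val
    exact S.continuous_mul.comp c1
  have hopen : IsOpen (m ⁻¹' {x | S.isUnit x}) := S.aux_unitsOpen.preimage hm
  obtain ⟨U, hU, hUeq⟩ := isOpen_induced_iff.mp hopen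
  refine ⟨U, hU, ?_, ?_⟩
  · have : m ⟨u, rfl⟩ ∈ {x | S.isUnit x} := by
      show S.isUnit (S.mul (S.inv u) u _)
      rw [S.inv_mul u]
      exact S.s_isUnit u
    have : (⟨u, rfl⟩ : T) ∈ Subtype.val ⁻¹' U := by rw [hUeq]; exact this
    exact this
  · intro v hvU hrv
    have hvm : S.isUnit (m ⟨v, hrv⟩) := by
      have : (⟨v, hrv⟩ : T) ∈ Subtype.val ⁻¹' U := hvU
      rw [hUeq] at this
      exact this
    -- m ⟨v,hrv⟩ = u⁻¹ v is a unit z, and z = r z = s u, so v = u z = u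
    set z := m ⟨v, hrv⟩ with hz
    have hz2 : z = S.s u := by
      have : S.r z = z := S.r_of_isUnit z hvm
      rw [← this, hz]
      show S.r (S.mul (S.inv u) v _) = S.s u
      rw [S.r_mul, S.r_inv]
    have hcomp : S.s u = S.r (S.mul (S.inv u) v ((S.s_inv u).trans hrv.symm)) := by
      show S.s u = S.r z
      rw [hz2, S.aux_r_s]
    have hv : S.mul u (S.mul (S.inv u) v ((S.s_inv u).trans hrv.symm)) hcomp = v :=
      S.aux_mul_inv_cancel u v _ _
    rw [← hv]
    exact S.aux_mul_unit_right u _ hz2 _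

theorem aux_fiber_inter_finite {K : Set G} (hK : IsCompact K) (x : G) :
    (K ∩ {v | S.r v = x}).Finite := by
  haveI := S.aux_t1Space
  have hcl : IsClosed {v : G | S.r v = x} := by
    have h : {v : G | S.r v = x} = S.r ⁻¹' {x} := rfl
    rw [h]; exact isClosed_singleton.preimage S.continuous_r
  have hKF : IsCompact (K ∩ {v | S.r v = x}) := hK.inter_right hcl
  have hcov : (K ∩ {v | S.r v = x}) ⊆
      ⋃ i ∈ (K ∩ {v | S.r v = x}), Classical.choose (S.aux_fiber_singleton_open i) := by
    intro v hv
    refine Set.mem_biUnion hv ?_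
    exact (Classical.choose_spec (S.aux_fiber_singleton_open v)).2.1
  obtain ⟨b, hbsub, hbfin, hbcov⟩ := hKF.elim_finite_subcover_image
    (fun i _ => (Classical.choose_spec (S.aux_fiber_singleton_open i)).1) hcov
  refine hbfin.subset ?_
  intro v hv
  obtain ⟨i, hib, hvi⟩ := Set.mem_iUnion₂.mp (hbcov hv)
  have hi : i ∈ K ∩ {w | S.r w = x} := hbsub hib
  have : v = i := (Classical.choose_spec (S.aux_fiber_singleton_open i)).2.2 v hvi
    (by rw [hv.2, ← hi.2])
  rw [this]; exact hib

theorem aux_ae_fiber (x : G) (hx : S.isUnit x) : ∀ᵐ v ∂(S.haar x), S.r v = x := by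
  rw [MeasureTheory.ae_iff]
  exact S.haar_supported x hx

include S in
theorem aux_msc : MeasurableSingletonClass G := by
  haveI := S.borel
  haveI := S.aux_t1Space
  exact ⟨fun a => isClosed_singleton.measurableSet⟩

theorem aux_integral_eq_sum {N : Type} [NormedAddCommGroup N] [NormedSpace ℝ N]
    [CompleteSpace N] (x : G) (hx : S.isUnit x) {K : Set G} (hK : IsCompact K)
    (g : G → N) (hg : ∀ v ∉ K, g v = 0) :
    ∫ v, g v ∂(S.haar x)
      = ∑ p ∈ (S.aux_fiber_inter_finite hK x).toFinset,
          ((S.haar x) {p}).toReal • g p := by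
  haveI := S.aux_msc
  haveI := S.haar_finiteOnCompacts x
  set F := (S.aux_fiber_inter_finite hK x).toFinset with hF
  have hmem : ∀ p, p ∈ F ↔ p ∈ K ∧ S.r p = x := by
    intro p; rw [hF, Set.Finite.mem_toFinset]; exact Iff.rfl
  have hae : g =ᵐ[S.haar x] fun v => ∑ p ∈ F, Set.indicator {p} (fun _ => g p) v := by
    filter_upwards [S.aux_ae_fiber x hx] with v hv
    by_cases hvK : v ∈ K
    · have hvF : v ∈ F := (hmem v).2 ⟨hvK, hv⟩
      have hc : ∀ p ∈ F, Set.indicator {p} (fun _ => g p) v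
          = if p = v then g p else 0 := by
        intro p _
        rw [Set.indicator_apply]
        simp [Set.mem_singleton_iff, eq_comm]
      rw [Finset.sum_congr rfl hc, Finset.sum_ite_eq' F v (fun p => g p), if_pos hvF]
    · rw [hg v hvK]
      refine (Finset.sum_eq_zero ?_).symm
      intro p hp
      rw [Set.indicator_apply, if_neg]
      intro hvp
      rw [Set.mem_singleton_iff] at hvp
      exact hvK (by rw [hvp]; exact ((hmem p).1 hp).1)
  rw [integral_congr_ae hae, integral_finset_sum]
  · refine Finset.sum_congr rfl fun p hp => ?_
    rw [integral_indicator (measurableSet_singleton p), setIntegral_const]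
    rfl
  · intro p hp
    refine (integrable_indicator_iff (measurableSet_singleton p)).2 ?_
    refine integrableOn_const ?_
    exact isCompact_singleton.measure_lt_top.ne

theorem aux_map_integral {N N' : Type} [NormedAddCommGroup N] [NormedSpace ℝ N]
    [NormedAddCommGroup N'] [NormedSpace ℝ N'] [CompleteSpace N] [CompleteSpace N']
    (T : N → N') (hT0 : T 0 = 0) (hTadd : ∀ a b, T (a + b) = T a + T b)
    (hTsmul : ∀ (c : ℝ) (a : N), T (c • a) = c • T a)
    (x : G) (hx : S.isUnit x) {K : Set G} (hK : IsCompact K)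
    (g : G → N) (hg : ∀ v ∉ K, g v = 0) :
    T (∫ v, g v ∂(S.haar x)) = ∫ v, T (g v) ∂(S.haar x) := by
  have hsum := map_sum (AddMonoidHom.mk' T hTadd)
    (fun p => ((S.haar x) {p}).toReal • g p) (S.aux_fiber_inter_finite hK x).toFinset
  simp only [AddMonoidHom.mk'_apply] at hsum
  calc T (∫ v, g v ∂(S.haar x))
      = T (∑ p ∈ (S.aux_fiber_inter_finite hK x).toFinset,
            ((S.haar x) {p}).toReal • g p) := by
        rw [S.aux_integral_eq_sum x hx hK g hg]
    _ = ∑ p ∈ (S.aux_fiber_inter_finite hK x).toFinset,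
          ((S.haar x) {p}).toReal • T (g p) := by
        rw [hsum]
        exact Finset.sum_congr rfl fun p _ => hTsmul _ _
    _ = ∫ v, T (g v) ∂(S.haar x) := by
        have hg' : ∀ v ∉ K, T (g v) = 0 := fun v hv => by rw [hg v hv]; exact hT0
        exact (S.aux_integral_eq_sum x hx hK (fun v => T (g v)) hg').symm

theorem aux_integral_swap {N : Type} [NormedAddCommGroup N] [NormedSpace ℝ N]
    [CompleteSpace N] (x : G) (hx : S.isUnit x) {K1 K2 : Set G} (hK1 : IsCompact K1) (hK2 : IsCompact K2)
    (L : G → G → N) (h1 : ∀ v p, v ∉ K1 → L v p = 0) (h2 : ∀ v p, p ∉ K2 → L v p = 0) :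
    ∫ v, ∫ p, L v p ∂(S.haar x) ∂(S.haar x)
      = ∫ p, ∫ v, L v p ∂(S.haar x) ∂(S.haar x) := by
  have hz1 : ∀ v ∉ K1, (∫ p, L v p ∂(S.haar x)) = 0 := by
    intro v hv
    have : (fun p => L v p) = fun _ => (0 : N) := funext fun p => h1 v p hv
    rw [this, integral_const]
    simp
  have hz2 : ∀ p ∉ K2, (∫ v, L v p ∂(S.haar x)) = 0 := by
    intro p hp
    have : (fun v => L v p) = fun _ => (0 : N) := funext fun v => h2 v p hp
    rw [this, integral_const]
    simp
  rw [S.aux_integral_eq_sum x hx hK1 _ hz1, S.aux_integral_eq_sum x hx hK2 _ hz2]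
  have e1 : ∀ v, (∫ p, L v p ∂(S.haar x))
      = ∑ p ∈ (S.aux_fiber_inter_finite hK2 x).toFinset,
          ((S.haar x) {p}).toReal • L v p := fun v =>
    S.aux_integral_eq_sum x hx hK2 (fun p => L v p) (fun p hp => h2 v p hp)
  have e2 : ∀ p, (∫ v, L v p ∂(S.haar x))
      = ∑ v ∈ (S.aux_fiber_inter_finite hK1 x).toFinset,
          ((S.haar x) {v}).toReal • L v p := fun p =>
    S.aux_integral_eq_sum x hx hK1 (fun v => L v p) (fun v hv => h1 v p hv)
  simp only [e1, e2, Finset.smul_sum]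
  rw [Finset.sum_comm]
  refine Finset.sum_congr rfl fun p _ => Finset.sum_congr rfl fun v _ => ?_
  rw [smul_comm]



theorem aux_mulSet_compact {K1 K2 : Set G} (hK1 : IsCompact K1) (hK2 : IsCompact K2) :
    ∃ K : Set G, IsCompact K ∧
      ∀ v w (h : S.s v = S.r w), v ∈ K1 → w ∈ K2 → S.mul v w h ∈ K := by
  haveI := S.unitSpace_t2
  have hcont : Continuous fun q : G × G =>
      ((⟨S.s q.1, S.s_isUnit q.1⟩, ⟨S.r q.2, S.r_isUnit q.2⟩) :
        {x : G // S.isUnit x} × {x : G // S.isUnit x}) := by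
    refine Continuous.prodMk ?_ ?_
    · exact (S.continuous_s.comp continuous_fst).subtype_mk _
    · exact (S.continuous_r.comp continuous_snd).subtype_mk _
  have hDclosed : IsClosed {q : G × G | S.s q.1 = S.r q.2} := by
    have heq : {q : G × G | S.s q.1 = S.r q.2}
        = (fun q : G × G =>
            ((⟨S.s q.1, S.s_isUnit q.1⟩, ⟨S.r q.2, S.r_isUnit q.2⟩) :
              {x : G // S.isUnit x} × {x : G // S.isUnit x})) ⁻¹'
          (Set.diagonal {x : G // S.isUnit x}) := by
      ext q
      simp only [Set.mem_setOf_eq, Set.mem_preimage, Set.mem_diagonal_iff, Subtype.ext_iff]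
    rw [heq]
    exact isClosed_diagonal.preimage hcont
  have hC' : IsCompact
      (Subtype.val ⁻¹' (K1 ×ˢ K2) : Set {q : G × G // S.s q.1 = S.r q.2}) := by
    rw [Topology.IsEmbedding.subtypeVal.isCompact_iff, Set.image_preimage_eq_inter_range,
      Subtype.range_coe_subtype]
    exact (hK1.prod hK2).inter_right hDclosed
  refine ⟨(fun q : {q : G × G // S.s q.1 = S.r q.2} => S.mul q.1.1 q.1.2 q.2) ''
      (Subtype.val ⁻¹' (K1 ×ˢ K2)), hC'.image S.continuous_mul, ?_⟩
  intro v w h hv hw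
  exact ⟨⟨(v, w), h⟩, ⟨hv, hw⟩, rfl⟩

end DynSys

section CastTool

variable {G : Type} [TopologicalSpace G] [MeasurableSpace G]
  {A : G → Type} [∀ x, NonUnitalNormedRing (A x)] [∀ x, StarRing (A x)]
  [∀ x, CStarRing (A x)] [∀ x, NormedSpace ℂ (A x)] [∀ x, CompleteSpace (A x)]
  [TopologicalSpace ((x : G) × A x)]
  {S : DynSys G A}
  {E : G → Type} [∀ x, NormedAddCommGroup (E x)] [∀ x, NormedSpace ℂ (E x)]
  [∀ x, CompleteSpace (E x)] [TopologicalSpace ((x : G) × E x)]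
  (H : GHilb S E)

theorem cA_heq {x y : G} (h : x = y) (a : A x) : HEq (cA (A := A) h a) a := by
  subst h; rfl

theorem cE_heq {x y : G} (h : x = y) (e : E x) : HEq (cE (E := E) h e) e := by
  subst h; rfl

theorem cA_eq_of_heq {x y : G} (h : x = y) {a : A x} {b : A y} (hab : HEq a b) :
    cA (A := A) h a = b := by subst h; exact eq_of_heq hab

theorem cE_eq_of_heq {x y : G} (h : x = y) {e : E x} {e' : E y} (he : HEq e e') :
    cE (E := E) h e = e' := by subst h; exact eq_of_heq he

theorem eq_cA_of_heq {x y : G} (h : x = y) {a : A x} {b : A y} (hab : HEq b a) :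
    b = cA (A := A) h a := by subst h; exact eq_of_heq hab

theorem eq_cE_of_heq {x y : G} (h : x = y) {e : E x} {e' : E y} (he : HEq e' e) :
    e' = cE (E := E) h e := by subst h; exact eq_of_heq he

theorem heq_zeroA {x y : G} (h : x = y) : HEq (0 : A x) (0 : A y) := by subst h; rfl
theorem heq_zeroE {x y : G} (h : x = y) : HEq (0 : E x) (0 : E y) := by subst h; rfl

theorem act_hcongr {u u' : G} (h : u = u') {a : A (S.s u)} {a' : A (S.s u')}
    (ha : HEq a a') : HEq (S.act u a) (S.act u' a') := by
  subst h; rw [eq_of_heq ha]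

theorem W_hcongr {u u' : G} (h : u = u') {e : E (S.s u)} {e' : E (S.s u')}
    (he : HEq e e') : HEq (H.W u e) (H.W u' e') := by
  subst h; rw [eq_of_heq he]

theorem innerE_hcongr {x y : G} (h : x = y) {a : E x} {a' : E y} {b : E x} {b' : E y}
    (ha : HEq a a') (hb : HEq b b') : HEq (H.innerE x a b) (H.innerE y a' b') := by
  subst h; rw [eq_of_heq ha, eq_of_heq hb]

theorem pi_hcongr (π : ∀ x, A x → (E x →L[ℂ] E x)) {x y : G} (h : x = y)
    {a : A x} {a' : A y} {e : E x} {e' : E y} (ha : HEq a a') (he : HEq e e') :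
    HEq (π x a e) (π y a' e') := by
  subst h; rw [eq_of_heq ha, eq_of_heq he]

theorem star_hcongr {x y : G} (h : x = y) {a : A x} {a' : A y} (ha : HEq a a') :
    HEq (star a) (star a') := by subst h; rw [eq_of_heq ha]

theorem sec_hcongrA (f : (u : G) → A (S.r u)) {a b : G} (h : a = b) :
    HEq (f a) (f b) := by subst h; rfl

theorem sec_hcongrE (ξ : (u : G) → E (S.r u)) {a b : G} (h : a = b) :
    HEq (ξ a) (ξ b) := by subst h; rfl

/-- restated composition law for the action -/
theorem act_comp' (u v : G) (h : S.s u = S.r v) (a : A (S.s v)) :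
    cA (S.r_mul u v h) (S.act (S.mul u v h) (cA (S.s_mul u v h).symm a))
      = S.act u (cA h.symm (S.act v a)) :=
  S.act_comp u v h a

theorem W_comp' (u v : G) (h : S.s u = S.r v) (e : E (S.s v)) :
    cE (S.r_mul u v h) (H.W (S.mul u v h) (cE (S.s_mul u v h).symm e))
      = H.W u (cE h.symm (H.W v e)) :=
  H.W_comp u v h e

theorem act_comp_heq (u v : G) (h : S.s u = S.r v) {b : A (S.s (S.mul u v h))}
    {a : A (S.s v)} (hb : HEq b a) {c : A (S.s u)} (hc : HEq c (S.act v a)) :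
    HEq (S.act (S.mul u v h) b) (S.act u c) := by
  have hb' : b = cA (S.s_mul u v h).symm a :=
    eq_cA_of_heq (S.s_mul u v h).symm (by exact hb)
  have hc' : c = cA h.symm (S.act v a) := eq_cA_of_heq h.symm (by exact hc)
  have key : cA (S.r_mul u v h) (S.act (S.mul u v h) b) = S.act u c := by
    rw [hb', hc']; exact act_comp' u v h a
  rw [← key]
  exact (cA_heq (S.r_mul u v h) (S.act (S.mul u v h) b)).symm

theorem W_comp_heq (u v : G) (h : S.s u = S.r v) {b : E (S.s (S.mul u v h))}
    {a : E (S.s v)} (hb : HEq b a) {c : E (S.s u)} (hc : HEq c (H.W v a)) :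
    HEq (H.W (S.mul u v h) b) (H.W u c) := by
  have hb' : b = cE (S.s_mul u v h).symm a :=
    eq_cE_of_heq (S.s_mul u v h).symm (by exact hb)
  have hc' : c = cE h.symm (H.W v a) := eq_cE_of_heq h.symm (by exact hc)
  have key : cE (S.r_mul u v h) (H.W (S.mul u v h) b) = H.W u c := by
    rw [hb', hc']; exact W_comp' H u v h a
  rw [← key]
  exact (cE_heq (S.r_mul u v h) (H.W (S.mul u v h) b)).symm

theorem W_unit_heq (u : G) (e : E (S.s (S.s u))) : HEq (H.W (S.s u) e) e := by
  rw [H.W_unit u e]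
  exact cast_heq _ e

/-- `W` indexed by any unit arrow is (heq to) the identity. -/
theorem W_unit_heq' {x : G} (hx : S.isUnit x) {e : E (S.s x)} {e' : E x}
    (he : HEq e e') : HEq (H.W x e) e' := by
  have h1 : x = S.s x := (S.s_of_isUnit x hx).symm
  have h2 : S.s x = S.s (S.s x) := congrArg S.s h1
  have hW := W_unit_heq H x (cE h2 e)
  refine HEq.trans (W_hcongr H h1 (cE_heq h2 e).symm) (HEq.trans hW ?_)
  exact (cE_heq h2 e).trans he

theorem cA_trans {x y z : G} (h1 : x = y) (h2 : y = z) (a : A x) :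
    cA (A := A) h2 (cA h1 a) = cA (h1.trans h2) a := by subst h1; subst h2; rfl

theorem cE_trans {x y z : G} (h1 : x = y) (h2 : y = z) (e : E x) :
    cE (E := E) h2 (cE h1 e) = cE (h1.trans h2) e := by subst h1; subst h2; rfl

theorem cA_zero {x y : G} (h : x = y) : cA (A := A) h 0 = 0 := by subst h; rfl
theorem cE_zero {x y : G} (h : x = y) : cE (E := E) h 0 = 0 := by subst h; rfl

theorem cA_add {x y : G} (h : x = y) (a b : A x) :
    cA (A := A) h (a + b) = cA h a + cA h b := by subst h; rfl

theorem cE_add {x y : G} (h : x = y) (a b : E x) :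
    cE (E := E) h (a + b) = cE h a + cE h b := by subst h; rfl

theorem cA_smulR {x y : G} (h : x = y) (c : ℝ) (a : A x) :
    cA (A := A) h (c • a) = c • cA h a := by subst h; rfl

theorem cE_smulR {x y : G} (h : x = y) (c : ℝ) (e : E x) :
    cE (E := E) h (c • e) = c • cE h e := by subst h; rfl

theorem real_smul_eqE {x : G} (c : ℝ) (e : E x) : ((c : ℂ)) • e = c • e := by
  rw [← algebraMap_smul ℂ c e, Complex.coe_algebraMap]

theorem real_smul_eqA {x : G} (c : ℝ) (a : A x) : ((c : ℂ)) • a = c • a := by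
  rw [← algebraMap_smul ℂ c a, Complex.coe_algebraMap]

theorem innerE_zero_right (x : G) (e : E x) : H.innerE x e 0 = 0 := by
  have h := H.innerE_add_right x e 0 0
  rw [add_zero] at h
  exact (add_eq_left.mp h.symm)

theorem innerE_zero_left (x : G) (e : E x) : H.innerE x 0 e = 0 := by
  rw [← H.innerE_star, innerE_zero_right, star_zero]

theorem innerE_add_left (x : G) (a b e : E x) :
    H.innerE x (a + b) e = H.innerE x a e + H.innerE x b e := by
  rw [← H.innerE_star, H.innerE_add_right, star_add, H.innerE_star, H.innerE_star]

theorem star_smulR {x : G} (c : ℝ) (a : A x) : star (c • a) = c • star a :=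
  map_real_smul (starAddEquiv : A x ≃+ A x) continuous_star c a

theorem innerE_smulR_left (x : G) (c : ℝ) (a e : E x) :
    H.innerE x (c • a) e = c • H.innerE x a e := by
  rw [← H.innerE_star, ← real_smul_eqE, H.innerE_smul_right, real_smul_eqA, star_smulR,
    H.innerE_star]

theorem act_zero (u : G) : S.act u 0 = 0 := by
  have h := S.act_add u 0 0
  rw [add_zero] at h
  exact add_eq_left.mp h.symm

theorem act_smulR (u : G) (c : ℝ) (a : A (S.s u)) :
    S.act u (c • a) = c • S.act u a := by
  rw [← real_smul_eqA, S.act_smul, real_smul_eqA]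

theorem W_zero (u : G) : H.W u 0 = 0 := by
  have h := H.W_add u 0 0
  rw [add_zero] at h
  exact add_eq_left.mp h.symm

theorem pi_zero (π : ∀ x, A x → (E x →L[ℂ] E x))
    (hπ_add : ∀ x a b, π x (a + b) = π x a + π x b) (x : G) (e : E x) :
    π x 0 e = 0 := by
  have h := hπ_add x 0 0
  rw [add_zero] at h
  have h0 : π x 0 = 0 := add_eq_left.mp h.symm
  rw [h0]
  rfl

theorem W_inv_W (w : G) (X : E (S.r w)) :
    H.W w (cE (S.r_inv w) (H.W (S.inv w) (cE (S.s_inv w).symm X))) = X := by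
  have h : S.s w = S.r (S.inv w) := (S.r_inv w).symm
  have hmul : S.mul w (S.inv w) h = S.r w := S.mul_inv w
  have pf : S.r w = S.s (S.mul w (S.inv w) h) := by rw [S.s_mul, S.s_inv]
  have h1 : HEq (H.W w (cE (S.r_inv w) (H.W (S.inv w) (cE (S.s_inv w).symm X))))
      (H.W (S.mul w (S.inv w) h) (cE pf X)) := by
    refine (W_comp_heq H w (S.inv w) h (a := cE (S.s_inv w).symm X) ?_ ?_).symm
    · exact (cE_heq pf X).trans (cE_heq (S.s_inv w).symm X).symm
    · exact cE_heq _ _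
  have h2 : HEq (H.W (S.mul w (S.inv w) h) (cE pf X))
      (H.W (S.r w) (cE (congrArg S.s hmul) (cE pf X))) :=
    W_hcongr H hmul (cE_heq _ _).symm
  have h3 : HEq (H.W (S.r w) (cE (congrArg S.s hmul) (cE pf X))) X := by
    refine W_unit_heq' H (S.r_isUnit w) ?_
    exact (cE_heq _ _).trans (cE_heq pf X)
  exact eq_of_heq ((h1.trans h2).trans h3)

theorem starSec_inv (f : (u : G) → A (S.r u)) (w : G) :
    S.starSec f (S.inv w) = S.act (S.inv w) (cA (S.s_inv w).symm (star (f w))) := by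
  show S.act (S.inv w) _ = S.act (S.inv w) _
  congr 1
  refine eq_of_heq (((cA_heq _ _).trans ?_).trans (cA_heq _ _).symm)
  exact star_hcongr (congrArg S.r (S.inv_inv w)) (sec_hcongrA f (S.inv_inv w))

theorem starSec_zero (f : (u : G) → A (S.r u)) (w : G) (h0 : f (S.inv w) = 0) :
    S.starSec f w = 0 := by
  show S.act w _ = 0
  rw [h0, star_zero, cA_zero, act_zero]

theorem cA_rfl {x : G} (h : x = x) (a : A x) : cA (A := A) h a = a := rfl
theorem cE_rfl {x : G} (h : x = x) (e : E x) : cE (E := E) h e = e := rfl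

theorem pi_castEq (π : ∀ x, A x → (E x →L[ℂ] E x)) {x y : G} (h : x = y)
    (a : A x) (e : E x) : cE h (π x a e) = π y (cA h a) (cE h e) := by
  subst h; rfl

theorem innerE_castEq {x y : G} (h : x = y) (a b : E x) :
    cA h (H.innerE x a b) = H.innerE y (cE h a) (cE h b) := by
  subst h; rfl

theorem integral_cA {x y : G} (h : x = y) (g : G → A x) (μ : Measure G) :
    ∫ w, cA (A := A) h (g w) ∂μ = cA h (∫ w, g w ∂μ) := by
  subst h; rfl

end CastTool

section Main

variable {G : Type} [TopologicalSpace G] [MeasurableSpace G]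
  {A : G → Type} [∀ x, NonUnitalNormedRing (A x)] [∀ x, StarRing (A x)]
  [∀ x, CStarRing (A x)] [∀ x, NormedSpace ℂ (A x)] [∀ x, CompleteSpace (A x)]
  [TopologicalSpace ((x : G) × A x)]
  {S : DynSys G A}
  {E : G → Type} [∀ x, NormedAddCommGroup (E x)] [∀ x, NormedSpace ℂ (E x)]
  [∀ x, CompleteSpace (E x)] [TopologicalSpace ((x : G) × E x)]
  (H : GHilb S E) (π : ∀ x, A x → (E x →L[ℂ] E x))
  (f : (u : G) → A (S.r u)) (ξ ξ' : (u : G) → E (S.r u))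

theorem innerE_smulR_right (x : G) (c : ℝ) (e a : E x) :
    H.innerE x e (c • a) = c • H.innerE x e a := by
  rw [← real_smul_eqE, H.innerE_smul_right, real_smul_eqA]

theorem MemCc_support {f : (u : G) → A (S.r u)} (hf : S.MemCc f) :
    ∃ K : Set G, IsCompact K ∧ ∀ v ∉ K, f v = 0 := by
  obtain ⟨n, g, hg, hsum⟩ := hf
  choose V hV ht2 hcont K hKV hK hK0 using hg
  refine ⟨⋃ i, K i, isCompact_iUnion hK, ?_⟩
  intro v hv
  rw [hsum v]
  apply Finset.sum_eq_zero
  intro i _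
  exact hK0 i v fun hvK => hv (Set.mem_iUnion.mpr ⟨i, hvK⟩)

theorem MemCcE_support {ξ : (u : G) → E (S.r u)}
    (hξ : GHilb.MemCcE (S := S) (E := E) ξ) :
    ∃ K : Set G, IsCompact K ∧ ∀ v ∉ K, ξ v = 0 := by
  obtain ⟨n, g, hg, hsum⟩ := hξ
  choose V hV ht2 hcont K hKV hK hK0 using hg
  refine ⟨⋃ i, K i, isCompact_iUnion hK, ?_⟩
  intro v hv
  rw [hsum v]
  apply Finset.sum_eq_zero
  intro i _
  exact hK0 i v fun hvK => hv (Set.mem_iUnion.mpr ⟨i, hvK⟩)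

/-- The common "middle" integrand. -/
noncomputable def Term2 (u p q y : G) (hp : S.r p = S.r u) (hq : S.r q = S.s p)
    (hy : S.r y = S.s q) : A (S.r u) :=
  cA hp (S.act p (H.innerE (S.s p) (cE (S.r_inv p) (ξ (S.inv p)))
    (cE hq (π (S.r q) (S.starSec f q) (H.W q (cE hy (ξ' y)))))))

theorem Term2_congr (u p : G) {q q' y y' : G} (hqq : q = q') (hyy : y = y')
    (hp : S.r p = S.r u) (hq : S.r q = S.s p) (hq' : S.r q' = S.s p)
    (hy : S.r y = S.s q) (hy' : S.r y' = S.s q') :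
    Term2 H π f ξ ξ' u p q y hp hq hy = Term2 H π f ξ ξ' u p q' y' hp hq' hy' := by
  subst hqq; subst hyy; rfl

/-- The common middle expression of the two sides. -/
noncomputable def MidInt (u : G) : A (S.r u) :=
  ∫ v, (if h1 : S.r v = S.r u then
      ∫ w, (if h2 : S.s v = S.r w then
          Term2 H π f ξ ξ' u v w
            (S.mul (S.inv w) (S.mul (S.inv v) u ((S.s_inv v).trans h1))
              (by rw [S.s_inv, S.r_mul, S.r_inv]; exact h2.symm))
            h1 h2.symm (by rw [S.r_mul, S.r_inv])
        else 0) ∂(S.haar (S.s v))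
    else 0) ∂(S.haar (S.r u))

/-- The right-hand side equals the middle expression. -/
theorem lemmaR (hπ_add : ∀ x a b, π x (a + b) = π x a + π x b)
    {Kf : Set G} (hKf : IsCompact Kf) (hf0 : ∀ v ∉ Kf, f v = 0) (u : G) :
    H.innerG ξ (H.cAct π (S.starSec f) ξ') u = MidInt H π f ξ ξ' u := by
  unfold GHilb.innerG MidInt
  refine congrArg (MeasureTheory.integral (S.haar (S.r u))) (funext fun v => ?_)
  by_cases h1 : S.r v = S.r u
  · rw [dif_pos h1, dif_pos h1]
    have hmv : S.r (S.mul (S.inv v) u ((S.s_inv v).trans h1)) = S.s v :=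
      (S.r_mul (S.inv v) u ((S.s_inv v).trans h1)).trans (S.r_inv v)
    set m := S.mul (S.inv v) u ((S.s_inv v).trans h1) with hm
    set ζ := cE (S.r_inv v) (ξ (S.inv v)) with hζ
    set T : E (S.r m) → A (S.r u) := fun e =>
      cA h1 (S.act v (H.innerE (S.s v) ζ (cE hmv e))) with hT
    have hT0 : T 0 = 0 := by
      rw [hT]
      show cA h1 (S.act v (H.innerE (S.s v) ζ (cE hmv 0))) = 0
      rw [cE_zero, innerE_zero_right, act_zero, cA_zero]
    have hTadd : ∀ a b, T (a + b) = T a + T b := by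
      intro a b
      show cA h1 (S.act v (H.innerE (S.s v) ζ (cE hmv (a + b)))) = _
      rw [cE_add, H.innerE_add_right, S.act_add, cA_add]
    have hTsmul : ∀ (c : ℝ) (a : E (S.r m)), T (c • a) = c • T a := by
      intro c a
      show cA h1 (S.act v (H.innerE (S.s v) ζ (cE hmv (c • a)))) = _
      rw [cE_smulR, innerE_smulR_right, act_smulR, cA_smulR]
    have hKinv : IsCompact (S.inv '' Kf) := hKf.image S.continuous_inv
    have hsupp : ∀ w, w ∉ S.inv '' Kf → (if h : S.r w = S.r m then
        cE h (π (S.r w) (S.starSec f w) (H.W w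
          (cE ((S.r_mul (S.inv w) m ((S.s_inv w).trans h)).trans (S.r_inv w))
            (ξ' (S.mul (S.inv w) m ((S.s_inv w).trans h)))))) else 0) = 0 := by
      intro w hw
      have hfw : f (S.inv w) = 0 := by
        apply hf0
        intro hmem
        exact hw ⟨S.inv w, hmem, S.inv_inv w⟩
      by_cases h : S.r w = S.r m
      · rw [dif_pos h, starSec_zero (S := S) f w hfw, pi_zero π hπ_add, cE_zero]
      · rw [dif_neg h]
    have step2 := S.aux_map_integral T hT0 hTadd hTsmul (S.r m) (S.r_isUnit m)
      hKinv _ hsupp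
    have hLHS : cA h1 (S.act v (H.innerE (S.s v) ζ
        (cE ((S.r_mul (S.inv v) u ((S.s_inv v).trans h1)).trans (S.r_inv v))
          (H.cAct π (S.starSec f) ξ' m))))
        = T (∫ w, (if h : S.r w = S.r m then
            cE h (π (S.r w) (S.starSec f w) (H.W w
              (cE ((S.r_mul (S.inv w) m ((S.s_inv w).trans h)).trans (S.r_inv w))
                (ξ' (S.mul (S.inv w) m ((S.s_inv w).trans h)))))) else 0)
            ∂(S.haar (S.r m))) := rfl
    rw [hLHS, step2]
    have hpt : ∀ w, T (if h : S.r w = S.r m then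
        cE h (π (S.r w) (S.starSec f w) (H.W w
          (cE ((S.r_mul (S.inv w) m ((S.s_inv w).trans h)).trans (S.r_inv w))
            (ξ' (S.mul (S.inv w) m ((S.s_inv w).trans h)))))) else 0)
        = (if h2 : S.s v = S.r w then
          Term2 H π f ξ ξ' u v w
            (S.mul (S.inv w) m
              (by rw [S.s_inv, S.r_mul, S.r_inv]; exact h2.symm))
            h1 h2.symm (by rw [S.r_mul, S.r_inv])
        else 0) := by
      intro w
      by_cases h2 : S.s v = S.r w
      · have h2' : S.r w = S.r m := by rw [hmv]; exact h2.symm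
        rw [dif_pos h2', dif_pos h2]
        show cA h1 (S.act v (H.innerE (S.s v) ζ (cE hmv (cE h2' _)))) = _
        rw [cE_trans]
        rfl
      · have h2' : ¬ S.r w = S.r m := by rw [hmv]; exact fun hh => h2 hh.symm
        rw [dif_neg h2', dif_neg h2]
        exact hT0
    have step3 : ∀ (g : G → A (S.r u)),
        ∫ w, g w ∂(S.haar (S.r m)) = ∫ w, g w ∂(S.haar (S.s v)) := fun g => by rw [hmv]
    exact Eq.trans (congrArg (MeasureTheory.integral (S.haar (S.r m))) (funext hpt)) (step3 _)
  · rw [dif_neg h1, dif_neg h1]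


/-- The translated integrand used for the left-invariance step. -/
noncomputable def ThetaFun (u v : G) (h1 : S.r v = S.r u) : G → A (S.r v) :=
  fun p =>
    if hp : S.r p = S.r v then
      Term2 H π f ξ ξ' v p (S.mul (S.inv p) v ((S.s_inv p).trans hp))
        (S.mul (S.inv (S.mul (S.inv p) v ((S.s_inv p).trans hp)))
          (S.mul (S.inv p) u ((S.s_inv p).trans (hp.trans h1)))
          (by rw [S.s_inv, S.r_mul, S.r_mul]))
        hp ((S.r_mul (S.inv p) v ((S.s_inv p).trans hp)).trans (S.r_inv p))
        (by rw [S.r_mul, S.r_inv])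
    else 0

/-- The core algebraic identity. -/
theorem coreL
    (hπ_star : ∀ x a e f', H.innerE x (π x a e) f' = H.innerE x e (π x (star a) f'))
    (hπ_equivariant : ∀ u (a : A (S.s u)) (e : E (S.s u)),
      H.W u (π (S.s u) a e) = π (S.r u) (S.act u a) (H.W u e))
    (u v w : G) (h1 : S.r v = S.r u) (h2 : S.s v = S.r w)
    (hw : S.r w = S.r (S.inv v)) :
    cA h1 (S.act v (H.innerE (S.s v)
      (cE (S.r_inv v) (cE hw (π (S.r w) (f w) (H.W w
        (cE ((S.r_mul (S.inv w) (S.inv v) ((S.s_inv w).trans hw)).trans (S.r_inv w))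
          (ξ (S.mul (S.inv w) (S.inv v) ((S.s_inv w).trans hw))))))))
      (cE ((S.r_mul (S.inv v) u ((S.s_inv v).trans h1)).trans (S.r_inv v))
        (ξ' (S.mul (S.inv v) u ((S.s_inv v).trans h1))))))
      = cA h1 (ThetaFun H π f ξ ξ' u v h1 (S.mul v w h2)) := by
  have hp : S.r (S.mul v w h2) = S.r v := S.r_mul v w h2
  set p := S.mul v w h2 with hpdef
  set z := S.mul (S.inv w) (S.inv v) ((S.s_inv w).trans hw) with hzdef
  set m := S.mul (S.inv v) u ((S.s_inv v).trans h1) with hmdef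
  have pfw : S.r z = S.s w :=
    (S.r_mul (S.inv w) (S.inv v) ((S.s_inv w).trans hw)).trans (S.r_inv w)
  have pf0 : S.r m = S.s v :=
    (S.r_mul (S.inv v) u ((S.s_inv v).trans h1)).trans (S.r_inv v)
  have hq2 : S.r (S.inv w) = S.s p := (S.r_inv w).trans (S.s_mul v w h2).symm
  have hy2 : S.r m = S.s (S.inv w) := pf0.trans (h2.trans (S.s_inv w).symm)
  have hwv : S.s (S.inv w) = S.r (S.inv v) := (S.s_inv w).trans hw
  have e0 : S.inv p = z := S.aux_inv_mul_rev v w h2 hwv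
  have hsv : S.s v = S.s (S.inv w) := h2.trans (S.s_inv w).symm
  -- q₀ = w⁻¹
  have hq_eq : S.mul (S.inv p) v ((S.s_inv p).trans hp) = S.inv w := by
    have c1 : S.s z = S.r v := by rw [hzdef, S.s_mul, S.s_inv]
    have step1 : S.mul (S.inv p) v ((S.s_inv p).trans hp) = S.mul z v c1 :=
      S.aux_mul_congr e0 rfl _ c1
    have pf2 : S.s (S.inv w) = S.r (S.mul (S.inv v) v (S.s_inv v)) := by
      rw [S.s_inv, S.r_mul]; exact hw
    have step2 : S.mul z v c1
        = S.mul (S.inv w) (S.mul (S.inv v) v (S.s_inv v)) pf2 :=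
      S.mul_assoc (S.inv w) (S.inv v) v hwv (S.s_inv v)
    have pf3 : S.s (S.inv w) = S.r (S.s v) := by
      rw [S.aux_r_s]; exact hsv.symm
    have step3 : S.mul (S.inv w) (S.mul (S.inv v) v (S.s_inv v)) pf2
        = S.mul (S.inv w) (S.s v) pf3 := S.aux_mul_congr rfl (S.inv_mul v) _ _
    have step4 : S.mul (S.inv w) (S.s v) pf3 = S.inv w :=
      S.aux_mul_unit_right _ _ hsv _
    exact ((step1.trans step2).trans step3).trans step4
  -- m' = w⁻¹ m
  have pfm : S.s (S.inv w) = S.r m := hy2.symm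
  have hm' : S.mul (S.inv p) u ((S.s_inv p).trans (hp.trans h1))
      = S.mul (S.inv w) m pfm := by
    have c2 : S.s z = S.r u := by rw [hzdef, S.s_mul, S.s_inv, h1]
    have step1 : S.mul (S.inv p) u ((S.s_inv p).trans (hp.trans h1)) = S.mul z u c2 :=
      S.aux_mul_congr e0 rfl _ c2
    have step2 : S.mul z u c2
        = S.mul (S.inv w) (S.mul (S.inv v) u ((S.s_inv v).trans h1))
            (by rw [S.r_mul]; exact hwv) :=
      S.mul_assoc (S.inv w) (S.inv v) u hwv ((S.s_inv v).trans h1)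
    have step3 : S.mul (S.inv w) (S.mul (S.inv v) u ((S.s_inv v).trans h1))
        (by rw [S.r_mul]; exact hwv) = S.mul (S.inv w) m pfm :=
      S.aux_mul_congr rfl rfl _ pfm
    exact (step1.trans step2).trans step3
  -- yθ = m
  have hy_eq : S.mul (S.inv (S.mul (S.inv p) v ((S.s_inv p).trans hp)))
      (S.mul (S.inv p) u ((S.s_inv p).trans (hp.trans h1)))
      (by rw [S.s_inv, S.r_mul, S.r_mul]) = m := by
    have c3 : S.inv (S.mul (S.inv p) v ((S.s_inv p).trans hp)) = w := by
      rw [hq_eq, S.inv_inv]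
    have pf4 : S.s w = S.r (S.mul (S.inv w) m pfm) := by
      rw [S.r_mul]; exact (S.r_inv w).symm
    have step1 : S.mul (S.inv (S.mul (S.inv p) v ((S.s_inv p).trans hp)))
        (S.mul (S.inv p) u ((S.s_inv p).trans (hp.trans h1)))
        (by rw [S.s_inv, S.r_mul, S.r_mul])
        = S.mul w (S.mul (S.inv w) m pfm) pf4 :=
      S.aux_mul_congr c3 hm' _ pf4
    exact step1.trans (S.aux_mul_inv_cancel w m pfm pf4)
  -- reduce the RHS
  have R1 : ThetaFun H π f ξ ξ' u v h1 p
      = Term2 H π f ξ ξ' v p (S.inv w) m hp hq2 hy2 := by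
    unfold ThetaFun
    rw [dif_pos hp]
    exact Term2_congr H π f ξ ξ' v p hq_eq hy_eq hp _ hq2 _ hy2
  refine congrArg (cA h1) ?_
  rw [R1]
  show S.act v (H.innerE (S.s v)
      (cE (S.r_inv v) (cE hw (π (S.r w) (f w) (H.W w (cE pfw (ξ z))))))
      (cE pf0 (ξ' m)))
    = cA hp (S.act p (H.innerE (S.s p) (cE (S.r_inv p) (ξ (S.inv p)))
        (cE hq2 (π (S.r (S.inv w)) (S.starSec f (S.inv w))
          (H.W (S.inv w) (cE hy2 (ξ' m)))))))
  -- the analytic chain on the left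
  have hA : H.innerE (S.s v)
      (cE (S.r_inv v) (cE hw (π (S.r w) (f w) (H.W w (cE pfw (ξ z))))))
      (cE pf0 (ξ' m))
      = cA h2.symm (H.innerE (S.r w) (π (S.r w) (f w) (H.W w (cE pfw (ξ z))))
          (cE h2 (cE pf0 (ξ' m)))) := by
    refine eq_cA_of_heq h2.symm ?_
    refine innerE_hcongr H h2 ?_ ?_
    · exact (cE_heq _ _).trans (cE_heq hw _)
    · exact (cE_heq h2 _).symm
  have hB := hπ_star (S.r w) (f w) (H.W w (cE pfw (ξ z))) (cE h2 (cE pf0 (ξ' m)))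
  have hC := (W_inv_W H w (π (S.r w) (star (f w)) (cE h2 (cE pf0 (ξ' m))))).symm
  rw [hA, hB, hC, H.W_inner w, pi_castEq π (S.s_inv w).symm,
    hπ_equivariant (S.inv w), ← starSec_inv (S := S) f w, cE_trans, cE_trans]
  -- now finish by a pure transport argument
  have hN : HEq (H.innerE (S.s p) (cE (S.r_inv p) (ξ (S.inv p)))
        (cE hq2 (π (S.r (S.inv w)) (S.starSec f (S.inv w))
          (H.W (S.inv w) (cE hy2 (ξ' m))))))
      (H.innerE (S.s w) (cE pfw (ξ z))
        (cE (S.r_inv w) (π (S.r (S.inv w)) (S.starSec f (S.inv w))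
          (H.W (S.inv w) (cE hy2 (ξ' m)))))) := by
    refine innerE_hcongr H (S.s_mul v w h2) ?_ ?_
    · exact (cE_heq _ _).trans ((sec_hcongrE ξ e0).trans (cE_heq pfw _).symm)
    · exact (cE_heq hq2 _).trans (cE_heq (S.r_inv w) _).symm
  refine eq_of_heq (HEq.trans (HEq.symm (act_comp_heq v w h2 hN (cA_heq h2.symm _)))
    (cA_heq hp _).symm)


/-- Auxiliary two-variable integrand for the Fubini step. -/
noncomputable def LFun (u : G) : G → G → A (S.r u) := fun v p =>
  if h1 : S.r v = S.r u then cA h1 (ThetaFun H π f ξ ξ' u v h1 p) else 0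

theorem Term2_zero₁ (u p q y : G) (hp : S.r p = S.r u) (hq : S.r q = S.s p)
    (hy : S.r y = S.s q) (h0 : ξ (S.inv p) = 0) :
    Term2 H π f ξ ξ' u p q y hp hq hy = 0 := by
  unfold Term2
  rw [h0, cE_zero, innerE_zero_left, act_zero, cA_zero]

theorem Term2_zero₂ (hπ_add : ∀ x a b, π x (a + b) = π x a + π x b)
    (u p q y : G) (hp : S.r p = S.r u) (hq : S.r q = S.s p)
    (hy : S.r y = S.s q) (h0 : f (S.inv q) = 0) :
    Term2 H π f ξ ξ' u p q y hp hq hy = 0 := by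
  unfold Term2
  rw [starSec_zero (S := S) f q h0, pi_zero π hπ_add, cE_zero, innerE_zero_right,
    act_zero, cA_zero]

theorem LFun_int
    (hπ_add : ∀ x a b, π x (a + b) = π x a + π x b)
    (hπ_star : ∀ x a e f', H.innerE x (π x a e) f' = H.innerE x e (π x (star a) f'))
    (hπ_equivariant : ∀ u (a : A (S.s u)) (e : E (S.s u)),
      H.W u (π (S.s u) a e) = π (S.r u) (S.act u a) (H.W u e))
    {Kf : Set G} (hKf : IsCompact Kf) (hf0 : ∀ v ∉ Kf, f v = 0) (u v : G) :
    (if h1 : S.r v = S.r u then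
      cA h1 (S.act v (H.innerE (S.s v)
        (cE (S.r_inv v) (H.cAct π f ξ (S.inv v)))
        (cE ((S.r_mul (S.inv v) u ((S.s_inv v).trans h1)).trans (S.r_inv v))
          (ξ' (S.mul (S.inv v) u ((S.s_inv v).trans h1)))))) else 0)
    = ∫ p, LFun H π f ξ ξ' u v p ∂(S.haar (S.r u)) := by
  by_cases h1 : S.r v = S.r u
  · rw [dif_pos h1]
    set m := S.mul (S.inv v) u ((S.s_inv v).trans h1) with hmdef
    have pf0 : S.r m = S.s v :=
      (S.r_mul (S.inv v) u ((S.s_inv v).trans h1)).trans (S.r_inv v)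
    set T : E (S.r (S.inv v)) → A (S.r u) := fun e =>
      cA h1 (S.act v (H.innerE (S.s v) (cE (S.r_inv v) e) (cE pf0 (ξ' m)))) with hT
    have hT0 : T 0 = 0 := by
      simp only [hT]
      rw [cE_zero, innerE_zero_left, act_zero, cA_zero]
    have hTadd : ∀ a b, T (a + b) = T a + T b := by
      intro a b
      simp only [hT]
      rw [cE_add, innerE_add_left, S.act_add, cA_add]
    have hTsmul : ∀ (c : ℝ) (a : E (S.r (S.inv v))), T (c • a) = c • T a := by
      intro c a
      simp only [hT]
      rw [cE_smulR, innerE_smulR_left, act_smulR, cA_smulR]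
    have hsupp : ∀ w, w ∉ Kf → (if h : S.r w = S.r (S.inv v) then
        cE h (π (S.r w) (f w) (H.W w
          (cE ((S.r_mul (S.inv w) (S.inv v) ((S.s_inv w).trans h)).trans (S.r_inv w))
            (ξ (S.mul (S.inv w) (S.inv v) ((S.s_inv w).trans h)))))) else 0) = 0 := by
      intro w hwK
      by_cases h : S.r w = S.r (S.inv v)
      · rw [dif_pos h, hf0 w hwK, pi_zero π hπ_add, cE_zero]
      · rw [dif_neg h]
    have step1 : T (H.cAct π f ξ (S.inv v))
        = ∫ w, T (if h : S.r w = S.r (S.inv v) then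
            cE h (π (S.r w) (f w) (H.W w
              (cE ((S.r_mul (S.inv w) (S.inv v) ((S.s_inv w).trans h)).trans (S.r_inv w))
                (ξ (S.mul (S.inv w) (S.inv v) ((S.s_inv w).trans h)))))) else 0)
            ∂(S.haar (S.r (S.inv v))) :=
      S.aux_map_integral T hT0 hTadd hTsmul (S.r (S.inv v)) (S.r_isUnit (S.inv v)) hKf _ hsupp
    have step2 : ∀ w, T (if h : S.r w = S.r (S.inv v) then
        cE h (π (S.r w) (f w) (H.W w
          (cE ((S.r_mul (S.inv w) (S.inv v) ((S.s_inv w).trans h)).trans (S.r_inv w))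
            (ξ (S.mul (S.inv w) (S.inv v) ((S.s_inv w).trans h)))))) else 0)
        = (if h2 : S.s v = S.r w then
            cA h1 (ThetaFun H π f ξ ξ' u v h1 (S.mul v w h2)) else 0) := by
      intro w
      by_cases h2 : S.s v = S.r w
      · have hw : S.r w = S.r (S.inv v) := by rw [S.r_inv]; exact h2.symm
        rw [dif_pos hw, dif_pos h2]
        simp only [hT]
        exact coreL H π f ξ ξ' hπ_star hπ_equivariant u v w h1 h2 hw
      · have hw : ¬ S.r w = S.r (S.inv v) := by
          rw [S.r_inv]; exact fun hh => h2 hh.symm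
        rw [dif_neg hw, dif_neg h2]
        exact hT0
    have step4 : ∀ w, (if h2 : S.s v = S.r w then
        cA h1 (ThetaFun H π f ξ ξ' u v h1 (S.mul v w h2)) else 0)
        = cA h1 (if h2 : S.s v = S.r w then
            ThetaFun H π f ξ ξ' u v h1 (S.mul v w h2) else 0) := by
      intro w
      by_cases h2 : S.s v = S.r w
      · rw [dif_pos h2, dif_pos h2]
      · rw [dif_neg h2, dif_neg h2, cA_zero]
    calc cA h1 (S.act v (H.innerE (S.s v)
        (cE (S.r_inv v) (H.cAct π f ξ (S.inv v))) (cE _ (ξ' m))))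
        = T (H.cAct π f ξ (S.inv v)) := rfl
      _ = ∫ w, T (if h : S.r w = S.r (S.inv v) then
            cE h (π (S.r w) (f w) (H.W w
              (cE ((S.r_mul (S.inv w) (S.inv v) ((S.s_inv w).trans h)).trans (S.r_inv w))
                (ξ (S.mul (S.inv w) (S.inv v) ((S.s_inv w).trans h)))))) else 0)
            ∂(S.haar (S.r (S.inv v))) := step1
      _ = ∫ w, (if h2 : S.s v = S.r w then
            cA h1 (ThetaFun H π f ξ ξ' u v h1 (S.mul v w h2)) else 0)
            ∂(S.haar (S.r (S.inv v))) :=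
          congrArg (MeasureTheory.integral _) (funext step2)
      _ = ∫ w, (if h2 : S.s v = S.r w then
            cA h1 (ThetaFun H π f ξ ξ' u v h1 (S.mul v w h2)) else 0)
            ∂(S.haar (S.s v)) := by rw [S.r_inv]
      _ = ∫ w, cA h1 (if h2 : S.s v = S.r w then
            ThetaFun H π f ξ ξ' u v h1 (S.mul v w h2) else 0)
            ∂(S.haar (S.s v)) :=
          congrArg (MeasureTheory.integral _) (funext step4)
      _ = cA h1 (∫ w, (if h2 : S.s v = S.r w then
            ThetaFun H π f ξ ξ' u v h1 (S.mul v w h2) else 0) ∂(S.haar (S.s v))) :=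
          integral_cA h1 _ _
      _ = cA h1 (∫ p, ThetaFun H π f ξ ξ' u v h1 p ∂(S.haar (S.r v))) := by
          rw [S.haar_left_invariant v (ThetaFun H π f ξ ξ' u v h1)]
      _ = cA h1 (∫ p, ThetaFun H π f ξ ξ' u v h1 p ∂(S.haar (S.r u))) :=
          congrArg (cA h1) (congrArg
            (fun ν => ∫ p, ThetaFun H π f ξ ξ' u v h1 p ∂ν) (congrArg S.haar h1))
      _ = ∫ p, cA h1 (ThetaFun H π f ξ ξ' u v h1 p) ∂(S.haar (S.r u)) :=
          (integral_cA h1 _ _).symm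
      _ = ∫ p, LFun H π f ξ ξ' u v p ∂(S.haar (S.r u)) := by
          refine congrArg (MeasureTheory.integral _) (funext fun p => ?_)
          unfold LFun
          rw [dif_pos h1]
  · rw [dif_neg h1]
    have hz : (fun p => LFun H π f ξ ξ' u v p) = fun _ => (0 : A (S.r u)) := by
      funext p
      unfold LFun
      rw [dif_neg h1]
    rw [hz]
    exact (integral_zero _ _).symm


theorem LFun_int2 (u p : G) :
    ∫ v, LFun H π f ξ ξ' u v p ∂(S.haar (S.r u))
    = (if h1 : S.r p = S.r u then
        ∫ w, (if h2 : S.s p = S.r w then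
          Term2 H π f ξ ξ' u p w
            (S.mul (S.inv w) (S.mul (S.inv p) u ((S.s_inv p).trans h1))
              (by rw [S.s_inv, S.r_mul, S.r_inv]; exact h2.symm))
            h1 h2.symm (by rw [S.r_mul, S.r_inv])
        else 0) ∂(S.haar (S.s p))
      else 0) := by
  by_cases hp1 : S.r p = S.r u
  · rw [dif_pos hp1]
    set gp : G → A (S.r p) := fun v => cA hp1.symm (LFun H π f ξ ξ' u v p) with hgp
    have e1 : ∫ v, LFun H π f ξ ξ' u v p ∂(S.haar (S.r u))
        = cA hp1 (∫ v, gp v ∂(S.haar (S.r p))) := by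
      have em : ∫ v, gp v ∂(S.haar (S.r p)) = ∫ v, gp v ∂(S.haar (S.r u)) :=
        congrArg (fun ν => ∫ v, gp v ∂ν) (congrArg S.haar hp1)
      rw [em]
      simp only [hgp]
      rw [integral_cA hp1.symm, cA_trans, cA_rfl]
    rw [e1, ← S.haar_left_invariant p gp]
    have e3 : ∀ w, (if h2 : S.s p = S.r w then gp (S.mul p w h2) else 0)
        = cA hp1.symm (if h2 : S.s p = S.r w then
            Term2 H π f ξ ξ' u p w
              (S.mul (S.inv w) (S.mul (S.inv p) u ((S.s_inv p).trans hp1))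
                (by rw [S.s_inv, S.r_mul, S.r_inv]; exact h2.symm))
              hp1 h2.symm (by rw [S.r_mul, S.r_inv])
          else 0) := by
      intro w
      by_cases h2 : S.s p = S.r w
      · rw [dif_pos h2, dif_pos h2]
        simp only [hgp]
        refine congrArg (cA hp1.symm) ?_
        have h1' : S.r (S.mul p w h2) = S.r u := (S.r_mul p w h2).trans hp1
        have hp' : S.r p = S.r (S.mul p w h2) := (S.r_mul p w h2).symm
        unfold LFun
        rw [dif_pos h1']
        unfold ThetaFun
        rw [dif_pos hp']
        have qF_eq : S.mul (S.inv p) (S.mul p w h2) ((S.s_inv p).trans hp') = w :=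
          S.aux_inv_mul_cancel p w h2 _
        have yF_eq : S.mul (S.inv (S.mul (S.inv p) (S.mul p w h2) ((S.s_inv p).trans hp')))
            (S.mul (S.inv p) u ((S.s_inv p).trans (hp'.trans h1')))
            (by rw [S.s_inv, S.r_mul, S.r_mul])
            = S.mul (S.inv w) (S.mul (S.inv p) u ((S.s_inv p).trans hp1))
              (by rw [S.s_inv, S.r_mul, S.r_inv]; exact h2.symm) :=
          S.aux_mul_congr (congrArg S.inv qF_eq) rfl _ _
        rw [Term2_congr H π f ξ ξ' (S.mul p w h2) p qF_eq yF_eq hp' _ h2.symm _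
          (by rw [S.r_mul, S.r_inv])]
        show cA h1' (cA hp' _) = _
        rw [cA_trans]
        rfl
      · rw [dif_neg h2, dif_neg h2, cA_zero]
    rw [congrArg (MeasureTheory.integral (S.haar (S.s p))) (funext e3),
      integral_cA hp1.symm, cA_trans, cA_rfl]
  · rw [dif_neg hp1]
    have hz : (fun v => LFun H π f ξ ξ' u v p) = fun _ => (0 : A (S.r u)) := by
      funext v
      unfold LFun
      by_cases h1 : S.r v = S.r u
      · rw [dif_pos h1]
        unfold ThetaFun
        rw [dif_neg (fun hh => hp1 (hh.trans h1)), cA_zero]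
      · rw [dif_neg h1]
    rw [hz]
    exact integral_zero _ _

theorem lemmaL
    (hπ_add : ∀ x a b, π x (a + b) = π x a + π x b)
    (hπ_star : ∀ x a e f', H.innerE x (π x a e) f' = H.innerE x e (π x (star a) f'))
    (hπ_equivariant : ∀ u (a : A (S.s u)) (e : E (S.s u)),
      H.W u (π (S.s u) a e) = π (S.r u) (S.act u a) (H.W u e))
    {Kf Kξ : Set G} (hKf : IsCompact Kf) (hf0 : ∀ v ∉ Kf, f v = 0)
    (hKξ : IsCompact Kξ) (hξ0 : ∀ v ∉ Kξ, ξ v = 0) (u : G) :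
    H.innerG (H.cAct π f ξ) ξ' u = MidInt H π f ξ ξ' u := by
  obtain ⟨KV, hKV, hKVmem⟩ := S.aux_mulSet_compact (hKξ.image S.continuous_inv)
    (hKf.image S.continuous_inv)
  have hsuppP : ∀ v q, q ∉ S.inv '' Kξ → LFun H π f ξ ξ' u v q = 0 := by
    intro v q hq
    unfold LFun
    by_cases h1 : S.r v = S.r u
    · rw [dif_pos h1]
      unfold ThetaFun
      by_cases hpv : S.r q = S.r v
      · have hz : ξ (S.inv q) = 0 := by
          apply hξ0
          intro hmem
          exact hq ⟨S.inv q, hmem, S.inv_inv q⟩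
        rw [dif_pos hpv, Term2_zero₁ H π f ξ ξ' v q _ _ hpv _ _ hz, cA_zero]
      · rw [dif_neg hpv, cA_zero]
    · rw [dif_neg h1]
  have hsuppV : ∀ v q, v ∉ KV → LFun H π f ξ ξ' u v q = 0 := by
    intro v q hv
    unfold LFun
    by_cases h1 : S.r v = S.r u
    · rw [dif_pos h1]
      unfold ThetaFun
      by_cases hpv : S.r q = S.r v
      · by_cases hξp : ξ (S.inv q) = 0
        · rw [dif_pos hpv, Term2_zero₁ H π f ξ ξ' v q _ _ hpv _ _ hξp, cA_zero]
        · by_cases hfq : f (S.inv (S.mul (S.inv q) v ((S.s_inv q).trans hpv))) = 0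
          · rw [dif_pos hpv, Term2_zero₂ H π f ξ ξ' hπ_add v q _ _ hpv _ _ hfq, cA_zero]
          · exfalso
            apply hv
            have pfc : S.s q = S.r (S.mul (S.inv q) v ((S.s_inv q).trans hpv)) := by
              rw [S.r_mul, S.r_inv]
            have hvm : S.mul q (S.mul (S.inv q) v ((S.s_inv q).trans hpv)) pfc = v :=
              S.aux_mul_inv_cancel q v _ pfc
            rw [← hvm]
            refine hKVmem q _ pfc ?_ ?_
            · refine ⟨S.inv q, ?_, S.inv_inv q⟩
              by_contra hc
              exact hξp (hξ0 _ hc)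
            · refine ⟨S.inv (S.mul (S.inv q) v ((S.s_inv q).trans hpv)), ?_, S.inv_inv _⟩
              by_contra hc
              exact hfq (hf0 _ hc)
      · rw [dif_neg hpv, cA_zero]
    · rw [dif_neg h1]
  have c1 : H.innerG (H.cAct π f ξ) ξ' u
      = ∫ v, ∫ q, LFun H π f ξ ξ' u v q ∂(S.haar (S.r u)) ∂(S.haar (S.r u)) := by
    unfold GHilb.innerG
    exact congrArg (MeasureTheory.integral _) (funext fun v =>
      LFun_int H π f ξ ξ' hπ_add hπ_star hπ_equivariant hKf hf0 u v)
  have c2 := S.aux_integral_swap (S.r u) (S.r_isUnit u) hKV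
    (hKξ.image S.continuous_inv) (LFun H π f ξ ξ' u) hsuppV hsuppP
  have c3 : ∫ q, ∫ v, LFun H π f ξ ξ' u v q ∂(S.haar (S.r u)) ∂(S.haar (S.r u))
      = MidInt H π f ξ ξ' u := by
    unfold MidInt
    exact congrArg (MeasureTheory.integral _) (funext fun q =>
      LFun_int2 H π f ξ ξ' u q)
  exact (c1.trans c2).trans c3

end Main


/-- Let `π : A → L(E)` be a `G`-equivariant representation of a `G`-algebra
`A` on a `G`-Hilbert `B`-module `(E, W)`.  Then the crossed-product action
`(f·ξ)(u) = ∫ π_{r(v)}(f(v)) W_v(ξ(v⁻¹u)) dλ^{r(u)}(v)` is *-compatible with the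
convolution involution: `⟨f·ξ, ξ'⟩_G = ⟨ξ, f^*·ξ'⟩_G` for all `f ∈ Γ_c(G; r*𝔄)` and
`ξ, ξ' ∈ Γ_c(G; r*𝔈)`. -/
theorem cAct_star_compatible {G : Type} [TopologicalSpace G] [MeasurableSpace G]
    {A : G → Type} [∀ x, NonUnitalNormedRing (A x)] [∀ x, StarRing (A x)]
    [∀ x, CStarRing (A x)] [∀ x, NormedSpace ℂ (A x)] [∀ x, CompleteSpace (A x)]
    [TopologicalSpace ((x : G) × A x)]
    {S : DynSys G A}
    {E : G → Type} [∀ x, NormedAddCommGroup (E x)] [∀ x, NormedSpace ℂ (E x)]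
    [∀ x, CompleteSpace (E x)] [TopologicalSpace ((x : G) × E x)]
    (H : GHilb S E)
    (π : ∀ x, A x → (E x →L[ℂ] E x))
    (hπ_add : ∀ x a b, π x (a + b) = π x a + π x b)
    (hπ_mul : ∀ x a b, π x (a * b) = π x a ∘L π x b)
    (hπ_smul : ∀ x (c : ℂ) a, π x (c • a) = c • π x a)
    (hπ_star : ∀ x a e f, H.innerE x (π x a e) f = H.innerE x e (π x (star a) f))
    (hπ_mo : ∀ x a e b, π x a (H.mo x e b) = H.mo x (π x a e) b)
    (hπ_equivariant : ∀ u (a : A (S.s u)) (e : E (S.s u)),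
      H.W u (π (S.s u) a e) = π (S.r u) (S.act u a) (H.W u e))
    (f : (u : G) → A (S.r u)) (hf : S.MemCc f)
    (ξ ξ' : (u : G) → E (S.r u))
    (hξ : GHilb.MemCcE (S := S) (E := E) ξ) (hξ' : GHilb.MemCcE (S := S) (E := E) ξ') :
    H.innerG (H.cAct π f ξ) ξ' = H.innerG ξ (H.cAct π (S.starSec f) ξ') := by
  obtain ⟨Kf, hKf, hf0⟩ := MemCc_support (S := S) hf
  obtain ⟨Kξ, hKξ, hξ0⟩ := MemCcE_support (S := S) hξ
  funext u
  exact (lemmaL H π f ξ ξ' hπ_add hπ_star hπ_equivariant hKf hf0 hKξ hξ0 u).trans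
    (lemmaR H π f ξ ξ' hπ_add hKf hf0 u).symm
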